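/- Let (Ω, P) be a probability space, X a random variable (covariates), S ∈ {0,1}, Z ∈ {0,1}, Y ∈ [0,1] random variables. Suppose S = g(X) a.s. for a measurable g : 𝒳 → {0,1}. Define λ_z(X) = E[S | X, Z=z] and μ_z(X) = E[SY | X, Z=z]. Then λ_1(X) = λ_0(X) = S a.s., and min(μ_1(X), λ_0(X)) = μ_1(X) a.s., and max(μ_1(X) + λ_0(X) - λ_1(X), 0) = μ_1(X) a.s.; consequently the lower bound E[max(μ_1(X)+λ_0(X)-λ_1(X),0) - μ_0(X)]/E[λ_0(X)] equals the upper bound E[min(μ_1(X),λ_0(X)) - μ_0(X)]/E[λ_0(X)]. -/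

import Mathlib

open MeasureTheory ProbabilityTheory

section Aux

variable {Ω 𝓧 : Type*} [MeasurableSpace Ω] [MeasurableSpace 𝓧]

/-- If the conditional probability of `{Z = z}` given `X` is a.e. positive, then
`μ {Z = z} ≠ 0`. -/
lemma aux_ne_zero (μ : Measure Ω) [IsProbabilityMeasure μ]
    (X : Ω → 𝓧) (Z : Ω → ℝ) (z : ℝ)
    (hpos : ∀ᵐ ω ∂μ, 0 < (μ[Set.indicator {ω' | Z ω' = z} (fun _ => (1:ℝ)) |
            MeasurableSpace.comap X inferInstance]) ω) :
    μ {ω | Z ω = z} ≠ 0 := by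
  intro h0
  have hae : (Set.indicator {ω' | Z ω' = z} (fun _ => (1:ℝ))) =ᵐ[μ] 0 := by
    have h1 : ∀ᵐ ω ∂μ, ω ∉ {ω' | Z ω' = z} :=
      measure_eq_zero_iff_ae_notMem.mp h0
    filter_upwards [h1] with ω hω
    simp only [Pi.zero_apply]
    exact Set.indicator_of_notMem hω (fun _ => (1:ℝ))
  have h2 : (μ[Set.indicator {ω' | Z ω' = z} (fun _ => (1:ℝ)) |
      MeasurableSpace.comap X inferInstance]) =ᵐ[μ]
      (μ[(0 : Ω → ℝ) | MeasurableSpace.comap X inferInstance]) := condExp_congr_ae hae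
  rw [condExp_zero] at h2
  have : ∀ᵐ ω ∂μ, False := by
    filter_upwards [hpos, h2] with ω h h'
    rw [h'] at h; exact lt_irrefl 0 h
  exact (this.exists).elim fun _ h => h

/-- Transfer a.e. statements about `X` from the conditional measure `μ[|Z = z]` to `μ`,
using positivity of the conditional probability of `{Z = z}` given `X`. -/
lemma aux_transfer (μ : Measure Ω) [IsProbabilityMeasure μ]
    (X : Ω → 𝓧) (Z : Ω → ℝ) (z : ℝ) (hX : Measurable X) (hZ : Measurable Z)
    (hpos : ∀ᵐ ω ∂μ, 0 < (μ[Set.indicator {ω' | Z ω' = z} (fun _ => (1:ℝ)) |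
            MeasurableSpace.comap X inferInstance]) ω)
    {P : 𝓧 → Prop} (hP : MeasurableSet {x | P x})
    (h : ∀ᵐ ω ∂(μ[|{ω | Z ω = z}]), P (X ω)) : ∀ᵐ ω ∂μ, P (X ω) := by
  have hm := hX.comap_le
  set s : Set Ω := {ω | Z ω = z} with hsdef
  have hs : MeasurableSet s := hZ (measurableSet_singleton z)
  set A : Set 𝓧 := {x | P x}ᶜ with hAdef
  have hA : MeasurableSet A := hP.compl
  set B : Set Ω := X ⁻¹' A with hBdef
  have hBnull : (μ[|s]) B = 0 := by
    rw [ae_iff] at h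
    convert h using 2
    rfl
  -- hence μ (s ∩ B) = 0
  have hsB : μ (s ∩ B) = 0 := by
    rw [cond_apply hs] at hBnull
    rcases mul_eq_zero.mp hBnull with h' | h'
    · exact absurd (ENNReal.inv_eq_zero.mp h') (measure_ne_top μ s)
    · exact h'
  -- set integral of the conditional expectation over B vanishes
  have hBm : MeasurableSet[MeasurableSpace.comap X inferInstance] B := ⟨A, hA, rfl⟩
  set f : Ω → ℝ := Set.indicator s (fun _ => (1:ℝ)) with hfdef
  have hfint : Integrable f μ := (integrable_const (1:ℝ)).indicator hs
  have hint0 : ∫ ω in B, (μ[f|MeasurableSpace.comap X inferInstance]) ω ∂μ = 0 := by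
    rw [setIntegral_condExp hm hfint hBm]
    have : ∫ ω in B, f ω ∂μ = ∫ ω in s, (1:ℝ) ∂(μ.restrict B) := by
      rw [hfdef, integral_indicator hs]
    rw [this, setIntegral_const, measureReal_def, Measure.restrict_apply hs, hsB]
    simp
  -- positivity a.e. forces μ B = 0
  have hposB : ∀ᵐ ω ∂(μ.restrict B), 0 < (μ[f|MeasurableSpace.comap X inferInstance]) ω := ae_restrict_of_ae hpos
  have hintB : Integrable (μ[f|MeasurableSpace.comap X inferInstance]) (μ.restrict B) := integrable_condExp.restrict
  have hzero : (μ[f|MeasurableSpace.comap X inferInstance]) =ᵐ[μ.restrict B] 0 :=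
    (integral_eq_zero_iff_of_nonneg_ae (hposB.mono fun ω h => le_of_lt h) hintB).mp hint0
  have hfalse : ∀ᵐ ω ∂(μ.restrict B), False := by
    filter_upwards [hposB, hzero] with ω h h'
    rw [h'] at h; exact lt_irrefl 0 h
  have hBnull' : μ B = 0 := by
    rw [ae_iff] at hfalse
    simpa using hfalse
  rw [ae_iff]
  have : {ω | ¬ P (X ω)} = B := by ext ω; simp [hBdef, hAdef]
  rw [this]; exact hBnull'

end Aux

/-- Point identification when covariates perfectly predict selection: if
`S = g(X)` a.s., then `λ₁(X) = λ₀(X) = S` a.s., `min(μ₁(X), λ₀(X)) = μ₁(X)` a.s.,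
`max(μ₁(X) + λ₀(X) - λ₁(X), 0) = μ₁(X)` a.s., and the lower and upper bounds on the
survivor intention-to-treat effect coincide. Here `λ_z ∘ X` and `μ_z ∘ X` are
versions of the conditional expectations of `S` and `S·Y` given `X` under the
conditional measure `μ[|Z = z]`. -/
theorem stmt_8 {Ω 𝓧 : Type*} [MeasurableSpace Ω] [MeasurableSpace 𝓧]
    (μ : Measure Ω) [IsProbabilityMeasure μ]
    (X : Ω → 𝓧) (S Z Y : Ω → ℝ) (g : 𝓧 → ℝ)
    (hX : Measurable X) (hS : Measurable S) (hZ : Measurable Z) (hY : Measurable Y)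
    (hg : Measurable g)
    (hZbin : ∀ᵐ ω ∂μ, Z ω = 0 ∨ Z ω = 1)
    (hYrange : ∀ᵐ ω ∂μ, Y ω ∈ Set.Icc (0:ℝ) 1)
    (hSg : ∀ᵐ ω ∂μ, S ω = g (X ω))
    (hgbin : ∀ x, g x = 0 ∨ g x = 1)
    -- P(Z = z | X) > 0 a.s. for z = 0, 1
    (hpos : ∀ z : ℝ, z = 0 ∨ z = 1 → ∀ᵐ ω ∂μ,
      0 < (μ[Set.indicator {ω' | Z ω' = z} (fun _ => (1:ℝ)) |
            MeasurableSpace.comap X inferInstance]) ω)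
    (lam muf : ℝ → 𝓧 → ℝ)
    (hlamMeas : ∀ z, Measurable (lam z)) (hmufMeas : ∀ z, Measurable (muf z))
    (hlam : ∀ z : ℝ, z = 0 ∨ z = 1 →
      (fun ω => lam z (X ω)) =ᵐ[μ[|{ω | Z ω = z}]]
        (μ[|{ω | Z ω = z}])[S | MeasurableSpace.comap X inferInstance])
    (hmuf : ∀ z : ℝ, z = 0 ∨ z = 1 →
      (fun ω => muf z (X ω)) =ᵐ[μ[|{ω | Z ω = z}]]
        (μ[|{ω | Z ω = z}])[fun ω => S ω * Y ω | MeasurableSpace.comap X inferInstance]) :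
    ((fun ω => lam 1 (X ω)) =ᵐ[μ] S) ∧
    ((fun ω => lam 0 (X ω)) =ᵐ[μ] S) ∧
    ((fun ω => min (muf 1 (X ω)) (lam 0 (X ω))) =ᵐ[μ] fun ω => muf 1 (X ω)) ∧
    ((fun ω => max (muf 1 (X ω) + lam 0 (X ω) - lam 1 (X ω)) 0) =ᵐ[μ] fun ω => muf 1 (X ω)) ∧
    ((∫ ω, max (muf 1 (X ω) + lam 0 (X ω) - lam 1 (X ω)) 0 ∂μ - ∫ ω, muf 0 (X ω) ∂μ) /
        ∫ ω, lam 0 (X ω) ∂μ =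
      (∫ ω, min (muf 1 (X ω)) (lam 0 (X ω)) ∂μ - ∫ ω, muf 0 (X ω) ∂μ) /
        ∫ ω, lam 0 (X ω) ∂μ) := by
  have hm := hX.comap_le
  have hgb : ∀ x, |g x| ≤ 1 := by
    intro x; rcases hgbin x with h | h <;> rw [h] <;> norm_num
  have hgXm : StronglyMeasurable[MeasurableSpace.comap X inferInstance] (fun ω => g (X ω)) :=
    (hg.comp (measurable_iff_comap_le.mpr le_rfl)).stronglyMeasurable
  -- `λ_z (X) = g(X)` a.e. μ for z = 0, 1
  have keylam : ∀ z : ℝ, z = 0 ∨ z = 1 → ∀ᵐ ω ∂μ, lam z (X ω) = g (X ω) := by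
    intro z hz
    haveI : IsProbabilityMeasure (μ[|{ω | Z ω = z}]) :=
      cond_isProbabilityMeasure (aux_ne_zero μ X Z z (hpos z hz))
    have hac : (μ[|{ω | Z ω = z}]) ≪ μ := cond_absolutelyContinuous
    have hSg' : S =ᵐ[μ[|{ω | Z ω = z}]] (fun ω => g (X ω)) := hac.ae_le hSg
    have hgint : Integrable (fun ω => g (X ω)) (μ[|{ω | Z ω = z}]) :=
      (integrable_const (1:ℝ)).mono' (hg.comp hX).aestronglyMeasurable
        (Filter.Eventually.of_forall fun ω => hgb (X ω))
    have hcexp : (μ[|{ω | Z ω = z}])[S | MeasurableSpace.comap X inferInstance] =ᵐ[μ[|{ω | Z ω = z}]] (fun ω => g (X ω)) := by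
      refine (condExp_congr_ae hSg').trans ?_
      rw [condExp_of_stronglyMeasurable hm hgXm hgint]
    have hcond : ∀ᵐ ω ∂(μ[|{ω | Z ω = z}]), lam z (X ω) = g (X ω) :=
      ((hlam z hz).trans hcexp)
    exact aux_transfer μ X Z z hX hZ (hpos z hz)
      (measurableSet_eq_fun (hlamMeas z) hg) hcond
  -- bounds on μ₁(X): 0 ≤ μ₁(X) ≤ g(X) a.e. μ
  have keymuf : ∀ᵐ ω ∂μ, 0 ≤ muf 1 (X ω) ∧ muf 1 (X ω) ≤ g (X ω) := by
    haveI : IsProbabilityMeasure (μ[|{ω | Z ω = (1:ℝ)}]) :=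
      cond_isProbabilityMeasure (aux_ne_zero μ X Z 1 (hpos 1 (Or.inr rfl)))
    have hac : (μ[|{ω | Z ω = (1:ℝ)}]) ≪ μ := cond_absolutelyContinuous
    have hSg' : S =ᵐ[μ[|{ω | Z ω = (1:ℝ)}]] (fun ω => g (X ω)) := hac.ae_le hSg
    have hY' : ∀ᵐ ω ∂(μ[|{ω | Z ω = (1:ℝ)}]), Y ω ∈ Set.Icc (0:ℝ) 1 := hac.ae_le hYrange
    have hgint : Integrable (fun ω => g (X ω)) (μ[|{ω | Z ω = (1:ℝ)}]) :=
      (integrable_const (1:ℝ)).mono' (hg.comp hX).aestronglyMeasurable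
        (Filter.Eventually.of_forall fun ω => hgb (X ω))
    have hSint : Integrable S (μ[|{ω | Z ω = (1:ℝ)}]) := hgint.congr hSg'.symm
    have hSYbd : ∀ᵐ ω ∂(μ[|{ω | Z ω = (1:ℝ)}]),
        0 ≤ S ω * Y ω ∧ S ω * Y ω ≤ S ω := by
      filter_upwards [hSg', hY'] with ω h1 h2
      have hS0 : 0 ≤ S ω := by rw [h1]; rcases hgbin (X ω) with h | h <;> rw [h] <;> norm_num
      constructor
      · exact mul_nonneg hS0 h2.1
      · calc S ω * Y ω ≤ S ω * 1 := by
              exact mul_le_mul_of_nonneg_left h2.2 hS0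
          _ = S ω := mul_one _
    have hSYint : Integrable (fun ω => S ω * Y ω) (μ[|{ω | Z ω = (1:ℝ)}]) := by
      refine (integrable_const (1:ℝ)).mono' (hS.mul hY).aestronglyMeasurable ?_
      filter_upwards [hSg', hY'] with ω h1 h2
      rw [h1]
      calc |g (X ω) * Y ω| = |g (X ω)| * |Y ω| := abs_mul _ _
        _ ≤ 1 * 1 := mul_le_mul (hgb _) (abs_le.mpr ⟨by linarith [h2.1], h2.2⟩)
            (abs_nonneg _) zero_le_one
        _ = 1 := one_mul _
    have hmono : (μ[|{ω | Z ω = (1:ℝ)}])[fun ω => S ω * Y ω | MeasurableSpace.comap X inferInstance]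
        ≤ᵐ[μ[|{ω | Z ω = (1:ℝ)}]] (μ[|{ω | Z ω = (1:ℝ)}])[S | MeasurableSpace.comap X inferInstance] :=
      condExp_mono hSYint hSint (hSYbd.mono fun ω h => h.2)
    have hnn : (0 : Ω → ℝ) ≤ᵐ[μ[|{ω | Z ω = (1:ℝ)}]]
        (μ[|{ω | Z ω = (1:ℝ)}])[fun ω => S ω * Y ω | MeasurableSpace.comap X inferInstance] :=
      condExp_nonneg (hSYbd.mono fun ω h => h.1)
    have hcexpS : (μ[|{ω | Z ω = (1:ℝ)}])[S | MeasurableSpace.comap X inferInstance] =ᵐ[μ[|{ω | Z ω = (1:ℝ)}]]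
        (fun ω => g (X ω)) := by
      refine (condExp_congr_ae hSg').trans ?_
      rw [condExp_of_stronglyMeasurable hm hgXm hgint]
    have hcond : ∀ᵐ ω ∂(μ[|{ω | Z ω = (1:ℝ)}]),
        0 ≤ muf 1 (X ω) ∧ muf 1 (X ω) ≤ g (X ω) := by
      filter_upwards [hmuf 1 (Or.inr rfl), hmono, hnn, hcexpS] with ω h1 h2 h3 h4
      refine ⟨by rw [h1]; exact h3, ?_⟩
      rw [h1, ← h4]; exact h2
    exact aux_transfer μ X Z 1 hX hZ (hpos 1 (Or.inr rfl))
      (((measurableSet_le measurable_const (hmufMeas 1)).inter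
        (measurableSet_le (hmufMeas 1) hg)) : MeasurableSet {x | 0 ≤ muf 1 x ∧ muf 1 x ≤ g x})
      hcond
  -- assemble
  have h1 : (fun ω => lam 1 (X ω)) =ᵐ[μ] S := by
    filter_upwards [keylam 1 (Or.inr rfl), hSg] with ω hω hω'
    rw [hω, hω']
  have h0 : (fun ω => lam 0 (X ω)) =ᵐ[μ] S := by
    filter_upwards [keylam 0 (Or.inl rfl), hSg] with ω hω hω'
    rw [hω, hω']
  have h3 : (fun ω => min (muf 1 (X ω)) (lam 0 (X ω))) =ᵐ[μ] fun ω => muf 1 (X ω) := by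
    filter_upwards [keylam 0 (Or.inl rfl), keymuf] with ω hω hω'
    rw [hω]; exact min_eq_left hω'.2
  have h4 : (fun ω => max (muf 1 (X ω) + lam 0 (X ω) - lam 1 (X ω)) 0)
      =ᵐ[μ] fun ω => muf 1 (X ω) := by
    filter_upwards [keylam 0 (Or.inl rfl), keylam 1 (Or.inr rfl), keymuf] with ω hω0 hω1 hω'
    rw [hω0, hω1]
    have : muf 1 (X ω) + g (X ω) - g (X ω) = muf 1 (X ω) := by ring
    rw [this]
    exact max_eq_left hω'.1
  refine ⟨h1, h0, h3, h4, ?_⟩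
  rw [integral_congr_ae h3, integral_congr_ae h4]
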